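/- Let A be a real n×n matrix. Then A is diagonalizable over ℝ if and only if there exists a positive definite real symmetric matrix H with H·A symmetric. -/

import Mathlib

open Matrix
open scoped MatrixOrder

lemma aux_posDef_transpose_mul_self {n : ℕ} (B : Matrix (Fin n) (Fin n) ℝ)
    (hB : IsUnit B) : (Bᵀ * B).PosDef := by
  refine PosDef.of_dotProduct_mulVec_pos (isHermitian_conjTranspose_mul_self B) fun x hx => ?_
  have h1 : star x ⬝ᵥ (Bᵀ * B) *ᵥ x = (B *ᵥ x) ⬝ᵥ (B *ᵥ x) := by
    rw [← mulVec_mulVec, dotProduct_mulVec, show (Bᵀ : Matrix (Fin n) (Fin n) ℝ) = Bᴴ from rfl,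
      vecMul_conjTranspose, star_star]
    simp [star, dotProduct_comm]
  rw [h1]
  have hy : B *ᵥ x ≠ 0 := by
    intro h
    apply hx
    have := congrArg (fun v => B⁻¹ *ᵥ v) h
    simpa [mulVec_mulVec, Matrix.nonsing_inv_mul B ((Matrix.isUnit_iff_isUnit_det B).mp hB)]
      using this
  refine lt_of_le_of_ne ?_ ?_
  · exact Finset.sum_nonneg fun i _ => mul_self_nonneg _
  · intro h
    exact hy (dotProduct_self_eq_zero.mp h.symm)

theorem stmt_6 (n : ℕ) (A : Matrix (Fin n) (Fin n) ℝ) :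
    (∃ (P D : Matrix (Fin n) (Fin n) ℝ), IsUnit P ∧ D.IsDiag ∧ A = P * D * P⁻¹)
      ↔ ∃ H : Matrix (Fin n) (Fin n) ℝ, H.PosDef ∧ Hᵀ = H ∧ (H * A)ᵀ = H * A := by
  have hct : ∀ (B : Matrix (Fin n) (Fin n) ℝ), Bᴴ = Bᵀ := fun B => by
    ext i j; simp [conjTranspose_apply]
  constructor
  · rintro ⟨P, D, hP, hD, rfl⟩
    have hPdet : IsUnit P.det := (Matrix.isUnit_iff_isUnit_det P).mp hP
    have hPinv : IsUnit P⁻¹ := by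
      rw [Matrix.isUnit_iff_isUnit_det, Matrix.det_nonsing_inv]
      exact isUnit_iff_ne_zero.mpr
        (by simpa using inv_ne_zero (isUnit_iff_ne_zero.mp hPdet))
    refine ⟨(P⁻¹)ᵀ * P⁻¹, aux_posDef_transpose_mul_self _ hPinv, ?_, ?_⟩
    · rw [transpose_mul, transpose_transpose]
    · have hDt : Dᵀ = D := by
        ext i j
        rcases eq_or_ne i j with rfl | hij
        · rfl
        · rw [transpose_apply, hD hij, hD (Ne.symm hij)]
      have key : (P⁻¹)ᵀ * P⁻¹ * (P * D * P⁻¹) = (P⁻¹)ᵀ * D * P⁻¹ := by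
        simp only [← mul_assoc]
        rw [mul_assoc ((P⁻¹)ᵀ) P⁻¹ P, Matrix.nonsing_inv_mul P hPdet, mul_one]
      rw [key, transpose_mul, transpose_mul, transpose_transpose, hDt, mul_assoc]
  · rintro ⟨H, hH, hHt, hHA⟩
    classical
    set S : Matrix (Fin n) (Fin n) ℝ := CFC.sqrt H with hSdef
    have hSsym : S.IsHermitian := (CFC.sqrt_nonneg H).posSemidef.1
    have hSS : S * S = H := CFC.sqrt_mul_sqrt_self H hH.posSemidef.nonneg
    have hSdetu : IsUnit S.det := by
      have hdd : S.det * S.det = H.det := by rw [← det_mul, hSS]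
      have hHdet : 0 < H.det := hH.det_pos
      refine isUnit_iff_ne_zero.mpr fun h => ?_
      rw [h, mul_zero] at hdd
      exact absurd hdd.symm (ne_of_gt hHdet)
    have hSinv : S⁻¹ * S = 1 := Matrix.nonsing_inv_mul S hSdetu
    have hSinv' : S * S⁻¹ = 1 := Matrix.mul_nonsing_inv S hSdetu
    have hAtH : Aᵀ * H = H * A := by
      have h := hHA
      rw [transpose_mul, hHt] at h
      exact h
    set M : Matrix (Fin n) (Fin n) ℝ := S * A * S⁻¹ with hMdef
    have hM : M.IsHermitian := by
      show Mᴴ = M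
      have hSinvH : (S⁻¹)ᴴ = S⁻¹ := by
        rw [Matrix.conjTranspose_nonsing_inv, hSsym.eq]
      have hMt : Mᴴ = S⁻¹ * Aᵀ * S := by
        rw [hMdef, conjTranspose_mul, conjTranspose_mul, hSinvH, hSsym.eq, hct A, mul_assoc]
      have h1 : Aᵀ * (S * S) = S * S * A := by rw [hSS, hAtH]
      have h2 := congrArg (fun X => S⁻¹ * X * S⁻¹) h1
      simp only [← mul_assoc] at h2
      rw [mul_assoc (S⁻¹ * Aᵀ * S) S S⁻¹, hSinv', mul_one, hSinv, one_mul] at h2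
      rw [hMt, h2, hMdef]
    have hA_eq : A = S⁻¹ * M * S := by
      rw [hMdef]
      simp only [← mul_assoc]
      rw [hSinv, one_mul, mul_assoc A S⁻¹ S, hSinv, mul_one]
    set U : Matrix (Fin n) (Fin n) ℝ := (hM.eigenvectorUnitary : Matrix (Fin n) (Fin n) ℝ)
    have hUU : star U * U = 1 := Unitary.coe_star_mul_self hM.eigenvectorUnitary
    have hUU' : U * star U = 1 := Unitary.coe_mul_star_self hM.eigenvectorUnitary
    set D : Matrix (Fin n) (Fin n) ℝ := diagonal (RCLike.ofReal ∘ hM.eigenvalues)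
    have hspec : M = U * D * star U := hM.spectral_theorem
    have hone : S⁻¹ * U * (star U * S) = 1 := by
      rw [mul_assoc, ← mul_assoc U, hUU', one_mul, hSinv]
    refine ⟨S⁻¹ * U, D, ?_, isDiag_diagonal _, ?_⟩
    · rw [Matrix.isUnit_iff_isUnit_det]
      refine isUnit_of_mul_isUnit_left (y := (star U * S).det) ?_
      rw [← det_mul, hone, det_one]
      exact isUnit_one
    · have hPinv : (S⁻¹ * U)⁻¹ = star U * S := Matrix.inv_eq_right_inv hone
      rw [hPinv, hA_eq, hspec]
      simp only [mul_assoc]
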